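/- arXiv:2510.22305 — 6 statements merged into one kernel-verified Lean document; each statement's English description precedes it below -/
import Mathlib

section
/- Let H be a complex Hilbert space and L a bounded dissipative operator on H (Re⟨x, Lx⟩ ≤ 0 for all x) with ker(L) ≠ H. Define the singular value gap s(L) := inf{ ‖Lx‖ : x ∈ ker(L)^⊥, ‖x‖ = 1 }, and let P_∞ denote the orthogonal projection onto ker(L). If the semigroup exp(tL) is hypocoercive with constants C ≥ 1 and ν > 0, i.e. ‖exp(tL)x − P_∞ x‖ ≤ C e^{−νt} ‖x − P_∞ x‖ for all t ≥ 0 and x ∈ H, then ν ≤ (1 + log C) · s(L). -/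
open NormedSpace

section Aux

variable {H : Type*} [NormedAddCommGroup H] [InnerProductSpace ℂ H] [CompleteSpace H]

local notation "⟪" x ", " y "⟫" => @inner ℂ _ _ x y

/-- For a dissipative operator, the range of `L` is orthogonal to the kernel of `L`. -/
lemma aux_range_orth (L : H →L[ℂ] H)
    (hdiss : ∀ x : H, (inner ℂ x (L x) : ℂ).re ≤ 0)
    {z : H} (hz : L z = 0) (h : H) : ⟪z, L h⟫ = 0 := by
  have main : ∀ h : H, (⟪z, L h⟫).re = 0 := by
    intro h
    set p := (⟪z, L h⟫).re with hp
    set q := (⟪h, L h⟫).re with hq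
    have hq0 : q ≤ 0 := hdiss h
    have key : ∀ t : ℝ, t * p + t ^ 2 * q ≤ 0 := by
      intro t
      have hd := hdiss (z + (t : ℂ) • h)
      have hexp : (⟪z + (t : ℂ) • h, L (z + (t : ℂ) • h)⟫).re = t * p + t ^ 2 * q := by
        simp only [map_add, map_smul, hz, zero_add, inner_add_left, inner_smul_left,
          inner_smul_right, Complex.conj_ofReal, Complex.add_re, Complex.re_ofReal_mul]
        ring
      rw [hexp] at hd
      exact hd
    have h1q : (0 : ℝ) < 1 - q := by linarith
    have ht : p / (1 - q) * (1 - q) = p := div_mul_cancel₀ _ (ne_of_gt h1q)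
    have hk := key (p / (1 - q))
    have hsq : (p / (1 - q)) ^ 2 ≤ 0 := by
      have hre : p / (1 - q) * p + (p / (1 - q)) ^ 2 * q = (p / (1 - q)) ^ 2 := by
        field_simp
        ring
      rw [← hre]; exact hk
    have h0 : p / (1 - q) = 0 := by
      have h' := sq_nonneg (p / (1 - q))
      have h'' : (p / (1 - q)) ^ 2 = 0 := le_antisymm hsq h'
      exact sq_eq_zero_iff.mp h''
    rw [← ht, h0, zero_mul]
  have h1 := main h
  have h2 := main (Complex.I • h)
  have h2' : (⟪z, L (Complex.I • h)⟫).re = -(⟪z, L h⟫).im := by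
    rw [map_smul, inner_smul_right]
    simp [Complex.mul_re]
  rw [h2'] at h2
  have him : (⟪z, L h⟫).im = 0 := by linarith
  exact Complex.ext (by simpa using h1) (by simpa using him)

/-- The semigroup generated by a dissipative operator is a contraction semigroup. -/
lemma aux_exp_contraction (L : H →L[ℂ] H)
    (hdiss : ∀ x : H, (inner ℂ x (L x) : ℂ).re ≤ 0)
    (y : H) (t : ℝ) (ht : 0 ≤ t) : ‖exp (t • L) y‖ ≤ ‖y‖ := by
  set u : ℝ → H := fun s => exp (s • L) y with hu_def
  have hu : ∀ s : ℝ, HasDerivAt u (L (u s)) s := by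
    intro s
    have h := (((ContinuousLinearMap.apply ℂ H y).restrictScalars ℝ).hasFDerivAt).comp_hasDerivAt
      s (hasDerivAt_exp_smul_const' L s)
    simpa [hu_def, ContinuousLinearMap.mul_apply, Function.comp_def] using h
  set f : ℝ → ℝ := fun s => (⟪u s, u s⟫).re with hf_def
  have hf : ∀ s : ℝ, HasDerivAt f (2 * (⟪u s, L (u s)⟫).re) s := by
    intro s
    have h := HasDerivAt.inner ℂ (hu s) (hu s)
    have h2 := Complex.reCLM.hasFDerivAt.comp_hasDerivAt s h
    have heq : (⟪u s, L (u s)⟫ + ⟪L (u s), u s⟫).re = 2 * (⟪u s, L (u s)⟫).re := by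
      rw [← inner_conj_symm (u s) (L (u s))]
      simp only [Complex.add_re, Complex.conj_re]
      ring
    simpa [heq, hf_def, Function.comp_def] using h2
  have hanti : Antitone f := by
    apply antitone_of_deriv_nonpos (fun s => (hf s).differentiableAt)
    intro s
    rw [(hf s).deriv]
    have := hdiss (u s)
    linarith
  have h0 : f t ≤ f 0 := hanti ht
  have hti : ∀ w : H, (⟪w, w⟫).re = ‖w‖ ^ 2 := fun w => by
    have := inner_self_eq_norm_sq (𝕜 := ℂ) (E := H) w
    simpa using this
  have hu0 : u 0 = y := by simp [hu_def]
  have hsq : ‖u t‖ ^ 2 ≤ ‖y‖ ^ 2 := by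
    rw [← hti, ← hti]
    calc (⟪u t, u t⟫).re ≤ (⟪u 0, u 0⟫).re := h0
    _ = (⟪y, y⟫).re := by rw [hu0]
  nlinarith [norm_nonneg (u t), norm_nonneg y]

end Aux

set_option maxHeartbeats 1000000

/-- For a bounded dissipative operator `L` with `ker L ≠ H`, if the semigroup
`exp(tL)` is hypocoercive with constants `C ≥ 1`, `ν > 0`, then
`ν ≤ (1 + log C) · s(L)`, where `s(L) = inf{‖Lx‖ : x ∈ ker(L)ᗮ, ‖x‖ = 1}` is the
singular value gap and `P∞` is the orthogonal projection onto `ker L`. -/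
theorem hypocoercive_rate_le_singular_value_gap
    {H : Type*} [NormedAddCommGroup H] [InnerProductSpace ℂ H] [CompleteSpace H]
    (L : H →L[ℂ] H)
    (hdiss : ∀ x : H, (inner ℂ x (L x) : ℂ).re ≤ 0)
    (hker : (LinearMap.ker (L : H →ₗ[ℂ] H) : Submodule ℂ H) ≠ ⊤)
    (Pinf : H →L[ℂ] H)
    (hPmem : ∀ x : H, Pinf x ∈ LinearMap.ker (L : H →ₗ[ℂ] H))
    (hPorth : ∀ x : H, x - Pinf x ∈ (LinearMap.ker (L : H →ₗ[ℂ] H) : Submodule ℂ H)ᗮ)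
    (C ν : ℝ) (hC : 1 ≤ C) (hν : 0 < ν)
    (hhypo : ∀ t : ℝ, 0 ≤ t → ∀ x : H,
      ‖NormedSpace.exp (t • L) x - Pinf x‖ ≤ C * Real.exp (-ν * t) * ‖x - Pinf x‖) :
    ν ≤ (1 + Real.log C) *
      sInf {r : ℝ | ∃ x : H, x ∈ (LinearMap.ker (L : H →ₗ[ℂ] H) : Submodule ℂ H)ᗮ ∧ ‖x‖ = 1 ∧ r = ‖L x‖} := by
  classical
  set K : Submodule ℂ H := LinearMap.ker (L : H →ₗ[ℂ] H) with hK
  set S : Set ℝ := {r : ℝ | ∃ x : H, x ∈ Kᗮ ∧ ‖x‖ = 1 ∧ r = ‖L x‖} with hS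
  have hlogC : 0 ≤ Real.log C := Real.log_nonneg hC
  have hCpos : (0 : ℝ) < C := lt_of_lt_of_le one_pos hC
  have h1logC : (0 : ℝ) < 1 + Real.log C := by linarith
  -- Pinf vanishes on Kᗮ
  have hPzero : ∀ y : H, y ∈ Kᗮ → Pinf y = 0 := by
    intro y hy
    have h1 : (inner ℂ (Pinf y) y : ℂ) = 0 := (Submodule.mem_orthogonal K y).mp hy _ (hPmem y)
    have h2 : (inner ℂ (Pinf y) (y - Pinf y) : ℂ) = 0 :=
      (Submodule.mem_orthogonal K _).mp (hPorth y) _ (hPmem y)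
    have h3 : (inner ℂ (Pinf y) (Pinf y) : ℂ) = 0 := by
      have := inner_sub_right (𝕜 := ℂ) (Pinf y) y (Pinf y)
      rw [h2, h1] at this
      linear_combination this
    exact inner_self_eq_zero.mp h3
  -- range of L is contained in Kᗮ
  have hLmem : ∀ h : H, L h ∈ Kᗮ := by
    intro h
    rw [Submodule.mem_orthogonal]
    intro u hu
    exact aux_range_orth L hdiss (LinearMap.mem_ker.mp hu) h
  -- key claim
  have key : ∀ x : H, x ∈ Kᗮ → ‖x‖ = 1 → ν ≤ (1 + Real.log C) * ‖L x‖ := by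
    intro x hx hnx
    set a : ℝ := ‖L x‖ with ha
    have ha0 : 0 ≤ a := norm_nonneg _
    have hPx : Pinf x = 0 := hPzero x hx
    have hPLx : Pinf (L x) = 0 := hPzero (L x) (hLmem x)
    set g : ℝ → H := fun t => exp (t • L) x with hg_def
    set D : ℝ → H := fun s => exp (s • L) (L x) with hD_def
    have hexp_eq : ∀ (t : ℝ) (y : H), exp (t • L) y = exp (t • L) y := by
      intro t y; rfl
    have hg_deriv : ∀ t : ℝ, HasDerivAt g (D t) t := by
      intro t
      have h := (((ContinuousLinearMap.apply ℂ H x).restrictScalars ℝ).hasFDerivAt).comp_hasDerivAt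
        t (hasDerivAt_exp_smul_const L t)
      simpa [hg_def, hD_def, ContinuousLinearMap.mul_apply, Function.comp_def] using h
    have hg0 : g 0 = x := by simp [hg_def]
    have hgnorm : ∀ t : ℝ, 0 ≤ t → ‖g t‖ ≤ C * Real.exp (-ν * t) := by
      intro t ht
      have := hhypo t ht x
      rw [hPx, sub_zero, sub_zero, hnx, mul_one, hexp_eq] at this
      exact this
    have hD1 : ∀ s : ℝ, 0 ≤ s → ‖D s‖ ≤ a := fun s hs =>
      aux_exp_contraction L hdiss (L x) s hs
    have hD2 : ∀ s : ℝ, 0 ≤ s → ‖D s‖ ≤ C * Real.exp (-ν * s) * a := by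
      intro s hs
      have := hhypo s hs (L x)
      rw [hPLx, sub_zero, sub_zero, hexp_eq] at this
      exact this
    set t₀ : ℝ := Real.log C / ν with ht₀_def
    have ht₀0 : 0 ≤ t₀ := div_nonneg hlogC hν.le
    have hexpt₀ : Real.exp (-ν * t₀) = C⁻¹ := by
      rw [ht₀_def]
      rw [show -ν * (Real.log C / ν) = -Real.log C by field_simp]
      rw [Real.exp_neg, Real.exp_log hCpos]
    -- step 1 : ‖g t₀ - x‖ ≤ a * t₀
    have step1 : ‖g t₀ - x‖ ≤ a * t₀ := by
      have := Convex.norm_image_sub_le_of_norm_hasDerivWithin_le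
        (f := g) (f' := D) (s := Set.Icc (0:ℝ) t₀) (C := a)
        (fun s _ => (hg_deriv s).hasDerivWithinAt)
        (fun s hs => hD1 s hs.1) (convex_Icc _ _)
        (Set.left_mem_Icc.mpr ht₀0) (Set.right_mem_Icc.mpr ht₀0)
      rw [hg0] at this
      calc ‖g t₀ - x‖ ≤ a * ‖t₀ - 0‖ := this
      _ = a * t₀ := by rw [sub_zero, Real.norm_of_nonneg ht₀0]
    -- continuity of D
    have hD_cont : Continuous D := by
      rw [continuous_iff_continuousAt]
      intro s
      have h := (((ContinuousLinearMap.apply ℂ H (L x)).restrictScalars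
        ℝ).hasFDerivAt).comp_hasDerivAt s (hasDerivAt_exp_smul_const L s)
      exact (by simpa [hD_def, Function.comp_def] using h : HasDerivAt D _ s).continuousAt
    -- step 2 : for t ≥ t₀, ‖g t - g t₀‖ ≤ a / ν
    have step2 : ∀ t : ℝ, t₀ ≤ t → ‖g t - g t₀‖ ≤ a / ν := by
      intro t ht
      have hftc : ∫ s in t₀..t, D s = g t - g t₀ :=
        intervalIntegral.integral_eq_sub_of_hasDerivAt
          (fun s _ => hg_deriv s) (hD_cont.intervalIntegrable _ _)
      have hce : Continuous fun s : ℝ => C * a * Real.exp (-ν * s) :=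
        continuous_const.mul (Real.continuous_exp.comp (continuous_const.mul continuous_id))
      have hbound : ‖∫ s in t₀..t, D s‖ ≤ |∫ s in t₀..t, C * a * Real.exp (-ν * s)| := by
        apply intervalIntegral.norm_integral_le_abs_of_norm_le
        · filter_upwards [MeasureTheory.ae_restrict_mem measurableSet_uIoc] with s hs
          rw [Set.uIoc_of_le ht] at hs
          have hs0 : 0 ≤ s := le_trans ht₀0 hs.1.le
          calc ‖D s‖ ≤ C * Real.exp (-ν * s) * a := hD2 s hs0
          _ = C * a * Real.exp (-ν * s) := by ring
        · exact hce.intervalIntegrable _ _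
      have hF : ∀ s : ℝ, HasDerivAt (fun s' : ℝ => -(C * a / ν) * Real.exp (-ν * s'))
          (C * a * Real.exp (-ν * s)) s := by
        intro s
        have h1 : HasDerivAt (fun s' : ℝ => -ν * s') (-ν) s := by
          simpa using (hasDerivAt_id s).const_mul (-ν)
        have h2 := (Real.hasDerivAt_exp (-ν * s)).comp s h1
        have h3 := h2.const_mul (-(C * a / ν))
        refine h3.congr_deriv ?_
        rw [show -(C * a / ν) * (Real.exp (-ν * s) * -ν) = C * a * Real.exp (-ν * s) * (ν / ν) by ring, div_self hν.ne', mul_one]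
      have hint : ∫ s in t₀..t, C * a * Real.exp (-ν * s)
          = (-(C * a / ν) * Real.exp (-ν * t)) - (-(C * a / ν) * Real.exp (-ν * t₀)) :=
        intervalIntegral.integral_eq_sub_of_hasDerivAt (fun s _ => hF s)
          (hce.intervalIntegrable _ _)
      have hval : |(-(C * a / ν) * Real.exp (-ν * t)) - (-(C * a / ν) * Real.exp (-ν * t₀))|
          ≤ a / ν := by
        rw [hexpt₀]
        have hee : Real.exp (-ν * t) ≤ C⁻¹ := by
          rw [← hexpt₀]
          exact Real.exp_le_exp.mpr (by nlinarith)
        have hexp_pos : 0 < Real.exp (-ν * t) := Real.exp_pos _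
        have hB : 0 ≤ C * a / ν := div_nonneg (mul_nonneg hCpos.le ha0) hν.le
        have hBC : C * a / ν * C⁻¹ = a / ν := by field_simp
        have h1 : 0 ≤ C * a / ν * Real.exp (-ν * t) := mul_nonneg hB hexp_pos.le
        have h2 : C * a / ν * Real.exp (-ν * t) ≤ C * a / ν * C⁻¹ :=
          mul_le_mul_of_nonneg_left hee hB
        have haν : 0 ≤ a / ν := div_nonneg ha0 hν.le
        rw [abs_le]
        constructor <;> linarith
      calc ‖g t - g t₀‖ = ‖∫ s in t₀..t, D s‖ := by rw [hftc]
      _ ≤ |∫ s in t₀..t, C * a * Real.exp (-ν * s)| := hbound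
      _ ≤ a / ν := by rw [hint]; exact hval
    -- step 3 : 1 ≤ C e^{-νt} + a t₀ + a/ν for t ≥ t₀
    have step3 : ∀ t : ℝ, t₀ ≤ t → 1 ≤ C * Real.exp (-ν * t) + a * t₀ + a / ν := by
      intro t ht
      have h1 : (1 : ℝ) = ‖x‖ := hnx.symm
      have h2 : ‖x‖ ≤ ‖g t‖ + ‖x - g t₀‖ + ‖g t₀ - g t‖ := by
        have := norm_add₃_le (a := g t) (b := g t₀ - g t) (c := x - g t₀)
        have hxeq : g t + (g t₀ - g t) + (x - g t₀) = x := by abel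
        calc ‖x‖ = ‖g t + (g t₀ - g t) + (x - g t₀)‖ := by rw [hxeq]
        _ ≤ ‖g t‖ + ‖g t₀ - g t‖ + ‖x - g t₀‖ := norm_add₃_le
        _ = ‖g t‖ + ‖x - g t₀‖ + ‖g t₀ - g t‖ := by ring
      have h3 : ‖x - g t₀‖ ≤ a * t₀ := by rw [norm_sub_rev]; exact step1
      have h4 : ‖g t₀ - g t‖ ≤ a / ν := by rw [norm_sub_rev]; exact step2 t ht
      have h5 : ‖g t‖ ≤ C * Real.exp (-ν * t) := hgnorm t (le_trans ht₀0 ht)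
      linarith [h1 ▸ h2]
    -- step 4 : take t → ∞
    have hlim : Filter.Tendsto (fun t : ℝ => C * Real.exp (-ν * t)) Filter.atTop (nhds 0) := by
      have h1 : Filter.Tendsto (fun t : ℝ => -ν * t) Filter.atTop Filter.atBot :=
        Filter.tendsto_id.const_mul_atTop_of_neg (neg_neg_iff_pos.mpr hν)
      have h2 := Real.tendsto_exp_atBot.comp h1
      simpa using h2.const_mul C
    have hfinal : 1 ≤ a * t₀ + a / ν := by
      have hev : ∀ᶠ t in Filter.atTop, 1 - a * t₀ - a / ν ≤ C * Real.exp (-ν * t) := by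
        filter_upwards [Filter.eventually_ge_atTop t₀] with t ht
        linarith [step3 t ht]
      have := ge_of_tendsto hlim hev
      linarith
    -- conclude ν ≤ (1 + log C) * a
    have : ν ≤ a * Real.log C + a := by
      have hh : ν * 1 ≤ ν * (a * t₀ + a / ν) := by
        exact mul_le_mul_of_nonneg_left hfinal hν.le
      rw [mul_one] at hh
      calc ν ≤ ν * (a * t₀ + a / ν) := hh
      _ = a * Real.log C + a := by
        rw [ht₀_def]
        field_simp
        try ring
    nlinarith [this]
  -- S is nonempty
  have hKc : Kᗮ ≠ ⊥ := by
    intro hbot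
    apply hker
    have : CompleteSpace K := (ContinuousLinearMap.isClosed_ker L).completeSpace_coe
    exact (Submodule.orthogonal_eq_bot_iff).mp hbot
  obtain ⟨v, hv_mem, hv_ne⟩ := Submodule.exists_mem_ne_zero_of_ne_bot hKc
  have hvnorm : (0 : ℝ) < ‖v‖ := norm_pos_iff.mpr hv_ne
  set x₀ : H := (‖v‖ : ℂ)⁻¹ • v with hx₀
  have hx₀mem : x₀ ∈ Kᗮ := Submodule.smul_mem _ _ hv_mem
  have hx₀norm : ‖x₀‖ = 1 := by
    rw [hx₀, norm_smul]
    simp [hvnorm.ne']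
  have hSne : S.Nonempty := ⟨‖L x₀‖, x₀, hx₀mem, hx₀norm, rfl⟩
  have hSlb : ∀ r ∈ S, ν / (1 + Real.log C) ≤ r := by
    rintro r ⟨x, hx, hnx, rfl⟩
    rw [div_le_iff₀ h1logC]
    calc ν ≤ (1 + Real.log C) * ‖L x‖ := key x hx hnx
    _ = ‖L x‖ * (1 + Real.log C) := mul_comm _ _
  have hInf : ν / (1 + Real.log C) ≤ sInf S := le_csInf hSne hSlb
  calc ν = (1 + Real.log C) * (ν / (1 + Real.log C)) := by field_simp
  _ ≤ (1 + Real.log C) * sInf S := by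
    exact mul_le_mul_of_nonneg_left hInf h1logC.le
end

section
/- Let H be a complex Hilbert space and L a bounded dissipative operator on H (Re⟨x, Lx⟩ ≤ 0 for all x) with ker(L) ≠ H. Define the singular value gap s(L) := inf{ ‖Lx‖ : x ∈ ker(L)^⊥, ‖x‖ = 1 }, and let P_∞ denote the orthogonal projection onto ker(L). If t ≥ 0 is such that ‖exp(tL)x − P_∞ x‖ ≤ e^{−1} ‖x − P_∞ x‖ for all x ∈ H, then t ≥ 1 / (2 s(L)). In particular, the relaxation time of the semigroup exp(tL) is at least 1/(2 s(L)). -/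
open NormedSpace in
lemma exp_contraction
    {H : Type*} [NormedAddCommGroup H] [InnerProductSpace ℂ H] [CompleteSpace H]
    (L : H →L[ℂ] H)
    (hdiss : ∀ x : H, (inner ℂ x (L x) : ℂ).re ≤ 0)
    {s : ℝ} (hs : 0 ≤ s) (y : H) :
    ‖exp (s • L) y‖ ≤ ‖y‖ := by
  have hE : (exp : (H →L[ℂ] H) → _) = exp := rfl
  set u : ℝ → H := fun r => exp (r • L) y with hu_def
  have hu : ∀ r : ℝ, HasDerivAt u (L (u r)) r := by
    intro r
    have h1 : HasDerivAt (fun r : ℝ => exp (r • L)) (L * exp (r • L)) r :=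
      hasDerivAt_exp_smul_const' (𝕂 := ℝ) L r
    have h2 := (((ContinuousLinearMap.apply ℂ H y).restrictScalars
        ℝ).hasFDerivAt.comp_hasDerivAt r h1)
    simp [ContinuousLinearMap.apply] at h2; exact h2
  have hf : ∀ r : ℝ, HasDerivAt (fun r => (inner ℂ (u r) (u r) : ℂ).re)
      (2 * (inner ℂ (u r) (L (u r)) : ℂ).re) r := by
    intro r
    have h3 : HasDerivAt (fun r => (inner ℂ (u r) (u r) : ℂ))
        ((inner ℂ (u r) (L (u r)) : ℂ) + (inner ℂ (L (u r)) (u r) : ℂ)) r :=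
      (hu r).inner ℂ (hu r)
    have h4 := (Complex.reCLM.hasFDerivAt.comp_hasDerivAt r h3)
    have hc : (inner ℂ (L (u r)) (u r) : ℂ) = starRingEnd ℂ (inner ℂ (u r) (L (u r))) :=
      (inner_conj_symm _ _).symm
    have : Complex.reCLM ((inner ℂ (u r) (L (u r)) : ℂ) + (inner ℂ (L (u r)) (u r) : ℂ))
        = 2 * (inner ℂ (u r) (L (u r)) : ℂ).re := by
      rw [hc]; simp only [Complex.reCLM_apply, Complex.add_re, Complex.conj_re]; ring
    rw [this] at h4
    exact h4
  have hanti : Antitone (fun r => (inner ℂ (u r) (u r) : ℂ).re) :=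
    antitone_of_hasDerivAt_nonpos hf (fun r => by
      have := hdiss (u r); simp; linarith)
  have h0 : u 0 = y := by simp [hu_def]
  have hle : (inner ℂ (u s) (u s) : ℂ).re ≤ (inner ℂ y y : ℂ).re := by
    have := hanti hs
    simpa [h0] using this
  have h1 : (inner ℂ (u s) (u s) : ℂ).re = ‖u s‖ ^ 2 := by
    simpa using inner_self_eq_norm_sq (𝕜 := ℂ) _
  have h2 : (inner ℂ y y : ℂ).re = ‖y‖ ^ 2 := by
    simpa using inner_self_eq_norm_sq (𝕜 := ℂ) _
  rw [h1, h2] at hle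
  rw [hE]
  show ‖u s‖ ≤ ‖y‖
  nlinarith [norm_nonneg (u s), norm_nonneg y]

open NormedSpace in
lemma exp_sub_id_bound
    {H : Type*} [NormedAddCommGroup H] [InnerProductSpace ℂ H] [CompleteSpace H]
    (L : H →L[ℂ] H)
    (hdiss : ∀ x : H, (inner ℂ x (L x) : ℂ).re ≤ 0)
    {t : ℝ} (ht : 0 ≤ t) (x : H) :
    ‖exp (t • L) x - x‖ ≤ t * ‖L x‖ := by
  have hE : (exp : (H →L[ℂ] H) → _) = exp := rfl
  set u : ℝ → H := fun r => exp (r • L) x with hu_def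
  have hcomm : ∀ r : ℝ, L * exp (r • L) = exp (r • L) * L := by
    intro r
    exact (((Commute.refl L).smul_right r).exp_right).eq
  have hu : ∀ r : ℝ, HasDerivAt u (exp (r • L) (L x)) r := by
    intro r
    have h1 : HasDerivAt (fun r : ℝ => exp (r • L)) (L * exp (r • L)) r :=
      hasDerivAt_exp_smul_const' (𝕂 := ℝ) L r
    have h2 := (((ContinuousLinearMap.apply ℂ H x).restrictScalars
        ℝ).hasFDerivAt.comp_hasDerivAt r h1)
    have h3 : (L * exp (r • L)) x = exp (r • L) (L x) := by
      rw [hcomm r]; rfl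
    simp [ContinuousLinearMap.apply, h3] at h2; exact h2
  have hbound : ∀ r ∈ Set.Icc (0:ℝ) t, ‖exp (r • L) (L x)‖ ≤ ‖L x‖ := by
    intro r hr
    have := exp_contraction L hdiss hr.1 (L x)
    rwa [hE] at this
  have key := Convex.norm_image_sub_le_of_norm_hasDerivWithin_le
    (f := u) (f' := fun r => exp (r • L) (L x)) (s := Set.Icc (0:ℝ) t)
    (fun r hr => (hu r).hasDerivWithinAt) hbound (convex_Icc 0 t)
    (Set.left_mem_Icc.2 ht) (Set.right_mem_Icc.2 ht)
  have h0 : u 0 = x := by simp [hu_def]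
  rw [h0] at key
  rw [hE]
  calc ‖exp (t • L) x - x‖ = ‖u t - x‖ := rfl
    _ ≤ ‖L x‖ * ‖t - 0‖ := key
    _ = t * ‖L x‖ := by rw [sub_zero, Real.norm_of_nonneg ht]; ring


/-- For a bounded dissipative operator `L` with `ker L ≠ H`, any time `t ≥ 0`
at which the semigroup has uniformly contracted by a factor `e⁻¹` towards equilibrium satisfies
`t ≥ 1/(2 s(L))`, where `s(L) = inf{‖Lx‖ : x ∈ ker(L)ᗮ, ‖x‖ = 1}` is the singular value gap
and `P∞` the orthogonal projection onto `ker L`.  In particular the relaxation time of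
`exp(tL)` is at least `1/(2 s(L))`. -/
theorem relaxation_time_lower_bound
    {H : Type*} [NormedAddCommGroup H] [InnerProductSpace ℂ H] [CompleteSpace H]
    (L : H →L[ℂ] H)
    (hdiss : ∀ x : H, (inner ℂ x (L x) : ℂ).re ≤ 0)
    (hker : (LinearMap.ker (L : H →ₗ[ℂ] H) : Submodule ℂ H) ≠ ⊤)
    (Pinf : H →L[ℂ] H)
    (hPmem : ∀ x : H, Pinf x ∈ LinearMap.ker (L : H →ₗ[ℂ] H))
    (hPorth : ∀ x : H, x - Pinf x ∈ (LinearMap.ker (L : H →ₗ[ℂ] H) : Submodule ℂ H)ᗮ)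
    (t : ℝ) (ht : 0 ≤ t)
    (hrelax : ∀ x : H,
      ‖NormedSpace.exp (t • L) x - Pinf x‖ ≤ Real.exp (-1) * ‖x - Pinf x‖) :
    1 / (2 * sInf {r : ℝ | ∃ x : H,
        x ∈ (LinearMap.ker (L : H →ₗ[ℂ] H) : Submodule ℂ H)ᗮ ∧ ‖x‖ = 1 ∧ r = ‖L x‖}) ≤ t := by
  set K : Submodule ℂ H := LinearMap.ker (L : H →ₗ[ℂ] H) with hK
  -- the kernel is closed, so it has an orthogonal projection
  haveI : CompleteSpace K := (ContinuousLinearMap.isClosed_ker L).completeSpace_coe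
  -- existence of a unit vector in Kᗮ
  obtain ⟨v, hvK, hv0⟩ : ∃ v : H, v ∈ Kᗮ ∧ v ≠ 0 := by
    by_contra hcon
    push_neg at hcon
    have : Kᗮ = ⊥ := by
      rw [Submodule.eq_bot_iff]
      intro v hv
      by_contra hne
      exact hne (hcon v hv)
    exact hker (Submodule.orthogonal_eq_bot_iff.mp this)
  set x0 : H := (‖v‖⁻¹ : ℂ) • v with hx0def
  have hx0K : x0 ∈ Kᗮ := Kᗮ.smul_mem _ hvK
  have hx0norm : ‖x0‖ = 1 := by
    rw [hx0def, norm_smul]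
    simp [norm_inv, hv0, norm_ne_zero_iff.mpr hv0]
  -- e⁻¹ ≤ 1/2
  have hexp : Real.exp (-1) ≤ 1/2 := by
    rw [Real.exp_neg]
    rw [inv_le_comm₀ (Real.exp_pos 1) (by norm_num)]
    have := Real.add_one_le_exp 1
    calc (1/2 : ℝ)⁻¹ = 2 := by norm_num
      _ ≤ Real.exp 1 := by linarith
  -- the key bound for unit vectors in Kᗮ
  have hkey : ∀ x : H, x ∈ Kᗮ → ‖x‖ = 1 → 1/2 ≤ t * ‖L x‖ := by
    intro x hxK hxnorm
    -- Pinf x = 0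
    have hP0 : Pinf x = 0 := by
      have h1 : (inner ℂ (Pinf x) x : ℂ) = 0 :=
        (Submodule.mem_orthogonal K x).mp hxK _ (hPmem x)
      have h2 : (inner ℂ (Pinf x) (x - Pinf x) : ℂ) = 0 :=
        (Submodule.mem_orthogonal K _).mp (hPorth x) _ (hPmem x)
      have h3 : (inner ℂ (Pinf x) (Pinf x) : ℂ) = 0 := by
        have h4 : (inner ℂ (Pinf x) (x - Pinf x) : ℂ)
            = inner ℂ (Pinf x) x - inner ℂ (Pinf x) (Pinf x) := inner_sub_right _ _ _
        rw [h1, h2] at h4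
        linear_combination h4
      exact inner_self_eq_zero.mp h3
    have hr := hrelax x
    rw [hP0, sub_zero, sub_zero, hxnorm, mul_one] at hr
    have hb := exp_sub_id_bound L hdiss ht x
    have htri : ‖x‖ - ‖NormedSpace.exp (t • L) x‖ ≤ ‖NormedSpace.exp (t • L) x - x‖ := by
      have h5 := norm_sub_norm_le x (NormedSpace.exp (t • L) x)
      rwa [norm_sub_rev] at h5
    rw [hxnorm] at htri
    linarith
  -- the set and its infimum
  set S : Set ℝ := {r : ℝ | ∃ x : H, x ∈ Kᗮ ∧ ‖x‖ = 1 ∧ r = ‖L x‖} with hS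
  have hSne : S.Nonempty := ⟨‖L x0‖, x0, hx0K, hx0norm, rfl⟩
  have htpos : 0 < t := by
    rcases lt_or_eq_of_le ht with h | h
    · exact h
    · exfalso
      have := hkey x0 hx0K hx0norm
      rw [← h] at this
      norm_num at this
  have hlb : ∀ r ∈ S, 1/(2*t) ≤ r := by
    rintro r ⟨x, hxK, hxnorm, rfl⟩
    have := hkey x hxK hxnorm
    rw [div_le_iff₀ (by positivity)]
    nlinarith
  have hsinf : 1/(2*t) ≤ sInf S := le_csInf hSne hlb
  have hsinfpos : 0 < sInf S := lt_of_lt_of_le (by positivity) hsinf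
  rw [div_le_iff₀ (by positivity)]
  have h2 := (div_le_iff₀ (by positivity : (0:ℝ) < 2*t)).mp hsinf
  nlinarith
end

section
/- Let H be a complex Hilbert space, let L_s be a bounded self-adjoint operator on H with ⟨x, L_s x⟩ ≤ 0 for all x, and let L_a be a bounded dissipative operator on H (Re⟨x, L_a x⟩ ≤ 0 for all x). For any γ > 0, set L_γ := L_a + γ L_s. Then for every x ∈ H, L_γ x = 0 if and only if L_s x = 0 and L_a x = 0. -/
open scoped InnerProductSpace

/-- If `T` is self-adjoint with `re ⟪y, T y⟫ ≤ 0` for all `y`, and `re ⟪x, T x⟫ = 0`,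
then `T x = 0`. -/
lemma neg_semidef_apply_eq_zero
    {H : Type*} [NormedAddCommGroup H] [InnerProductSpace ℂ H] [CompleteSpace H]
    (T : H →L[ℂ] H) (hT : IsSelfAdjoint T)
    (hneg : ∀ y : H, (inner ℂ y (T y) : ℂ).re ≤ 0)
    {x : H} (hx : (inner ℂ x (T x) : ℂ).re = 0) : T x = 0 := by
  have hsymm := (ContinuousLinearMap.isSelfAdjoint_iff_isSymmetric.mp hT)
  set c : ℝ := (inner ℂ (T x) (T (T x)) : ℂ).re with hc
  have hc0 : c ≤ 0 := hneg (T x)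
  have hTx2 : (inner ℂ x (T (T x)) : ℂ) = (‖T x‖ : ℂ) ^ 2 := by
    have h := hsymm x (T x)
    simp only [ContinuousLinearMap.coe_coe] at h
    rw [← h]
    exact inner_self_eq_norm_sq_to_K (𝕜 := ℂ) (T x)
  have key : ∀ t : ℝ, -2 * t * ‖T x‖ ^ 2 + t ^ 2 * c ≤ 0 := by
    intro t
    have h := hneg (x - (t : ℂ) • T x)
    have expand : (inner ℂ (x - (t : ℂ) • T x) (T (x - (t : ℂ) • T x)) : ℂ).re
        = (inner ℂ x (T x) : ℂ).re - 2 * t * ‖T x‖ ^ 2 + t ^ 2 * c := by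
      rw [map_sub, map_smul, inner_sub_left, inner_sub_right, inner_sub_right,
        inner_smul_left, inner_smul_right, inner_smul_left, inner_smul_right]
      have h1 : (inner ℂ (T x) (T x) : ℂ) = (‖T x‖ : ℂ) ^ 2 := inner_self_eq_norm_sq_to_K (𝕜 := ℂ) (T x)
      rw [hTx2, h1]
      simp [← Complex.ofReal_pow]
      rw [hc]
      ring
    rw [expand, hx] at h
    linarith
  by_contra hne
  have hpos : 0 < ‖T x‖ ^ 2 := pow_pos (norm_pos_iff.mpr hne) 2
  rcases lt_or_eq_of_le hc0 with hclt | hceq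
  · have := key (‖T x‖ ^ 2 / c)
    have ht : ‖T x‖ ^ 2 / c < 0 := div_neg_of_pos_of_neg hpos hclt
    have htc : (‖T x‖ ^ 2 / c) * c = ‖T x‖ ^ 2 := div_mul_cancel₀ _ (ne_of_lt hclt)
    have h2 : (‖T x‖ ^ 2 / c) ^ 2 * c = (‖T x‖ ^ 2 / c) * ‖T x‖ ^ 2 := by
      rw [sq, mul_assoc, htc]
    rw [h2] at this
    nlinarith [mul_neg_of_neg_of_pos ht hpos]
  · have := key (-1)
    rw [← hceq] at this
    nlinarith

/-- For `L_γ = L_a + γ L_s` with `L_s` self-adjoint negative semidefinite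
and `L_a` dissipative, `L_γ x = 0` iff `L_s x = 0` and `L_a x = 0`. -/
theorem kernel_of_hypocoercive_generator
    {H : Type*} [NormedAddCommGroup H] [InnerProductSpace ℂ H] [CompleteSpace H]
    (Ls La : H →L[ℂ] H)
    (hLs_sa : IsSelfAdjoint Ls)
    (hLs_neg : ∀ x : H, (inner ℂ x (Ls x) : ℂ).re ≤ 0)
    (hLa_diss : ∀ x : H, (inner ℂ x (La x) : ℂ).re ≤ 0)
    (γ : ℝ) (hγ : 0 < γ) :
    ∀ x : H, (La + (γ : ℂ) • Ls) x = 0 ↔ Ls x = 0 ∧ La x = 0 := by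
  intro x
  constructor
  · intro h
    have h' : La x + (γ : ℂ) • Ls x = 0 := by simpa using h
    have hinner : (inner ℂ x (La x) : ℂ).re + γ * (inner ℂ x (Ls x) : ℂ).re = 0 := by
      have : (inner ℂ x (La x + (γ : ℂ) • Ls x) : ℂ) = 0 := by rw [h']; simp
      rw [inner_add_right, inner_smul_right] at this
      have := congrArg Complex.re this
      simpa using this
    have hs0 : (inner ℂ x (Ls x) : ℂ).re = 0 := by
      nlinarith [hLa_diss x, hLs_neg x]
    have hLsx : Ls x = 0 := neg_semidef_apply_eq_zero Ls hLs_sa hLs_neg hs0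
    refine ⟨hLsx, ?_⟩
    rw [hLsx] at h'; simpa using h'
  · rintro ⟨h1, h2⟩
    simp [h1, h2]
end

section
/- Let H be a complex Hilbert space, let L_s be a bounded self-adjoint operator on H with ⟨x, L_s x⟩ ≤ 0 for all x, let L_a be a bounded skew-adjoint operator on H (L_a* = −L_a), let γ > 0, and set L := L_a + γ L_s. Fix T > 0 and suppose the flow Poincaré inequality holds with constants C₁, C₂ > 0: for every x₀ ∈ ker(L)^⊥, (1/T) ∫₀ᵀ ‖exp(tL)x₀‖² dt ≤ (C₁ + γ² C₂) · (1/T) ∫₀ᵀ ⟨exp(tL)x₀, −L_s exp(tL)x₀⟩ dt. Then for every x₀ ∈ ker(L)^⊥ and every t ≥ 0, (1/T) ∫_t^{t+T} ‖exp(sL)x₀‖² ds ≤ e^{−2νt} ‖x₀‖², where ν = γ / (C₁ + γ² C₂). -/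
open MeasureTheory

section Aux

open NormedSpace

local notation "⟪" x ", " y "⟫" => @inner ℂ _ _ x y

variable {H : Type*} [NormedAddCommGroup H] [InnerProductSpace ℂ H] [CompleteSpace H]

private lemma flow_hasDerivAt' (L : H →L[ℂ] H) (x : H) (t : ℝ) :
    HasDerivAt (fun s : ℝ => exp (s • L) x) ((exp (t • L)) (L x)) t := by
  have h2 : HasDerivAt (fun s : ℝ => exp (s • L)) (exp (t • L) * L) t :=
    hasDerivAt_exp_smul_const L t
  have h3 := ((ContinuousLinearMap.apply ℂ H x).restrictScalars ℝ).hasFDerivAt.comp_hasDerivAt t h2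
  exact h3

private lemma flow_hasDerivAt (L : H →L[ℂ] H) (x : H) (t : ℝ) :
    HasDerivAt (fun s : ℝ => exp (s • L) x) (L ((exp (t • L)) x)) t := by
  have h := flow_hasDerivAt' L x t
  have hcomm : exp (t • L) * L = L * exp (t • L) :=
    ((((Commute.refl L).smul_left t)).exp_left).eq
  have : (exp (t • L)) (L x) = L ((exp (t • L)) x) := by
    have := congrArg (fun A : H →L[ℂ] H => A x) hcomm
    simpa using this
  rwa [this] at h

private lemma exp_fix (A : H →L[ℂ] H) (y : H) (hy : A y = 0) (t : ℝ) :
    exp (t • A) y = y := by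
  have hd : ∀ s : ℝ, HasDerivAt (fun s : ℝ => exp (s • A) y) 0 s := by
    intro s
    simpa [hy] using flow_hasDerivAt' A y s
  have := is_const_of_deriv_eq_zero (f := fun s : ℝ => exp (s • A) y)
    (fun s => (hd s).differentiableAt) (fun s => (hd s).deriv) t 0
  simpa using this

private lemma re_inner_skew (La : H →L[ℂ] H) (hLa_skew : ContinuousLinearMap.adjoint La = -La)
    (x : H) : (⟪x, La x⟫).re = 0 := by
  have h := ContinuousLinearMap.adjoint_inner_left La x x
  rw [hLa_skew] at h
  have h2 : -⟪La x, x⟫ = ⟪x, La x⟫ := by simpa [inner_neg_left] using h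
  have h3 : ⟪La x, x⟫ = (starRingEnd ℂ) ⟪x, La x⟫ := (inner_conj_symm _ _).symm
  have h4 : (⟪La x, x⟫).re = (⟪x, La x⟫).re := by rw [h3, Complex.conj_re]
  have h5 := congrArg Complex.re h2
  rw [Complex.neg_re, h4] at h5
  linarith

private lemma re_inner_L (Ls La : H →L[ℂ] H)
    (hLa_skew : ContinuousLinearMap.adjoint La = -La)
    (γ : ℝ) (L : H →L[ℂ] H) (hL : L = La + (γ : ℂ) • Ls) (x : H) :
    (⟪x, L x⟫).re = γ * (⟪x, Ls x⟫).re := by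
  rw [hL]
  simp only [ContinuousLinearMap.add_apply, ContinuousLinearMap.coe_smul',
    Pi.smul_apply, inner_add_right, inner_smul_right, Complex.add_re]
  rw [re_inner_skew La hLa_skew x]
  simp [Complex.re_ofReal_mul]

private lemma pos_inner_zero_eq_zero (A : H →L[ℂ] H) (hA : IsSelfAdjoint A)
    (hpos : ∀ x : H, 0 ≤ (⟪x, A x⟫).re) (y : H) (hy : (⟪y, A y⟫).re = 0) : A y = 0 := by
  set b : ℝ := ‖A y‖ ^ 2 with hb
  set c : ℝ := (⟪A y, A (A y)⟫).re with hc
  have hc0 : 0 ≤ c := hpos (A y)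
  have hAyy' : (⟪A y, A y⟫).re = b := by
    rw [inner_self_eq_norm_sq_to_K]; simp [hb, ← Complex.ofReal_pow]
  have hAyy : (⟪y, A (A y)⟫).re = b := by
    have h1 : ⟪y, A (A y)⟫ = ⟪A y, A y⟫ := by
      rw [← ContinuousLinearMap.adjoint_inner_left, hA.adjoint_eq]
    rw [h1, hAyy']
  have key : ∀ u : ℝ, 0 ≤ u ^ 2 * c + 2 * u * b := by
    intro u
    have hp := hpos (y + (u : ℂ) • A y)
    have hexp : ⟪y + (u:ℂ) • A y, A (y + (u:ℂ) • A y)⟫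
        = ⟪y, A y⟫ + (u:ℂ) * ⟪y, A (A y)⟫ + (u:ℂ) * ⟪A y, A y⟫
          + (u:ℂ) * ((u:ℂ) * ⟪A y, A (A y)⟫) := by
      rw [map_add, ContinuousLinearMap.map_smul]
      simp only [inner_add_left, inner_add_right, inner_smul_left, inner_smul_right,
        Complex.conj_ofReal, smul_eq_mul]
      ring
    rw [hexp] at hp
    simp only [Complex.add_re, Complex.re_ofReal_mul, hy, hAyy, hAyy'] at hp
    nlinarith [hp]
  have hb0 : b = 0 := by
    by_contra hne
    have hbpos : 0 < b := lt_of_le_of_ne (by positivity) (Ne.symm hne)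
    have hcp : 0 < c + 1 := by linarith
    have hk := key (-(b / (c + 1)))
    set d : ℝ := b / (c + 1) with hdd
    have hdpos : 0 < d := div_pos hbpos hcp
    have hdb : d * (c + 1) = b := by rw [hdd]; exact div_mul_cancel₀ b hcp.ne'
    nlinarith [hk, hdpos, hdb, hbpos, sq_nonneg d]
  have : ‖A y‖ = 0 := by nlinarith [norm_nonneg (A y)]
  simpa using this

private lemma ker_adjoint (Ls La : H →L[ℂ] H)
    (hLs_sa : IsSelfAdjoint Ls)
    (hLs_neg : ∀ x : H, (⟪x, Ls x⟫).re ≤ 0)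
    (hLa_skew : ContinuousLinearMap.adjoint La = -La)
    (γ : ℝ) (hγ : 0 < γ) (L : H →L[ℂ] H) (hL : L = La + (γ : ℂ) • Ls)
    (y : H) (hy : L y = 0) : ContinuousLinearMap.adjoint L y = 0 := by
  have h0 : (⟪y, L y⟫).re = 0 := by rw [hy]; simp
  have h1 : (⟪y, Ls y⟫).re = 0 := by
    have h := re_inner_L Ls La hLa_skew γ L hL y
    rw [h0] at h
    rcases mul_eq_zero.mp h.symm with h' | h'
    · exact absurd h' (ne_of_gt hγ)
    · exact h'
  have hLs0 : Ls y = 0 := by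
    have := pos_inner_zero_eq_zero (-Ls) hLs_sa.neg
      (fun x => by
        simp only [ContinuousLinearMap.neg_apply, inner_neg_right, Complex.neg_re, neg_nonneg]
        exact hLs_neg x)
      y (by simp [inner_neg_right, h1])
    simpa [neg_eq_zero] using this
  have hLa0 : La y = 0 := by
    have h := hy
    rw [hL] at h
    simpa [hLs0] using h
  rw [← ContinuousLinearMap.star_eq_adjoint, hL]
  have : star (La + (γ : ℂ) • Ls) = -La + (starRingEnd ℂ (γ : ℂ)) • Ls := by
    rw [star_add, star_smul]
    rw [ContinuousLinearMap.star_eq_adjoint, ContinuousLinearMap.star_eq_adjoint,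
      hLa_skew, hLs_sa.adjoint_eq]
    rfl
  rw [this]
  simp [hLa0, hLs0]

private lemma mem_orth_invariant (Ls La : H →L[ℂ] H)
    (hLs_sa : IsSelfAdjoint Ls)
    (hLs_neg : ∀ x : H, (⟪x, Ls x⟫).re ≤ 0)
    (hLa_skew : ContinuousLinearMap.adjoint La = -La)
    (γ : ℝ) (hγ : 0 < γ) (L : H →L[ℂ] H) (hL : L = La + (γ : ℂ) • Ls)
    (x₀ : H) (hx₀ : x₀ ∈ (LinearMap.ker (L : H →ₗ[ℂ] H) : Submodule ℂ H)ᗮ) (t : ℝ) :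
    exp (t • L) x₀ ∈ (LinearMap.ker (L : H →ₗ[ℂ] H) : Submodule ℂ H)ᗮ := by
  rw [Submodule.mem_orthogonal]
  intro y hy
  have hyk : L y = 0 := hy
  rw [← ContinuousLinearMap.adjoint_inner_left]
  have hadj : ContinuousLinearMap.adjoint (exp (t • L))
      = exp (t • ContinuousLinearMap.adjoint L) := by
    rw [← ContinuousLinearMap.star_eq_adjoint, star_exp]
    congr 1
    rw [star_smul, ContinuousLinearMap.star_eq_adjoint]
    norm_num
  rw [hadj, exp_fix _ _ (ker_adjoint Ls La hLs_sa hLs_neg hLa_skew γ hγ L hL y hyk)]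
  exact hx₀ y hy

end Aux

/-- Suppose `L = L_a + γ L_s` with `L_s` self-adjoint negative semidefinite and
`L_a` skew-adjoint, and suppose the flow Poincaré inequality holds on `[0, T]` with constants
`C₁, C₂ > 0`.  Then the moving time-average of `‖exp(sL)x₀‖²` decays exponentially with rate
`2ν`, where `ν = γ/(C₁ + γ²C₂)`. -/
theorem time_average_decay_of_flow_poincare
    {H : Type*} [NormedAddCommGroup H] [InnerProductSpace ℂ H] [CompleteSpace H]
    (Ls La : H →L[ℂ] H)
    (hLs_sa : IsSelfAdjoint Ls)
    (hLs_neg : ∀ x : H, (inner ℂ x (Ls x) : ℂ).re ≤ 0)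
    (hLa_skew : ContinuousLinearMap.adjoint La = -La)
    (γ : ℝ) (hγ : 0 < γ)
    (L : H →L[ℂ] H) (hL : L = La + (γ : ℂ) • Ls)
    (T : ℝ) (hT : 0 < T)
    (C₁ C₂ : ℝ) (hC₁ : 0 < C₁) (hC₂ : 0 < C₂)
    (hflow : ∀ x₀ ∈ (LinearMap.ker (L : H →ₗ[ℂ] H) : Submodule ℂ H)ᗮ,
      (1 / T) * ∫ t in (0 : ℝ)..T, ‖NormedSpace.exp (t • L) x₀‖ ^ 2 ≤
        (C₁ + γ ^ 2 * C₂) * ((1 / T) * ∫ t in (0 : ℝ)..T,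
          (inner ℂ (NormedSpace.exp (t • L) x₀)
            (-(Ls (NormedSpace.exp (t • L) x₀))) : ℂ).re)) :
    ∀ x₀ ∈ (LinearMap.ker (L : H →ₗ[ℂ] H) : Submodule ℂ H)ᗮ, ∀ t : ℝ, 0 ≤ t →
      (1 / T) * ∫ s in t..(t + T), ‖NormedSpace.exp (s • L) x₀‖ ^ 2 ≤
        Real.exp (-2 * (γ / (C₁ + γ ^ 2 * C₂)) * t) * ‖x₀‖ ^ 2 := by
  intro x₀ hx₀ t ht
  set C : ℝ := C₁ + γ ^ 2 * C₂ with hCdef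
  have hC : 0 < C := by positivity
  set ν : ℝ := γ / C with hνdef
  have hν0 : 0 < ν := div_pos hγ hC
  set u : ℝ → H := fun s => NormedSpace.exp (s • L) x₀ with hudef
  set f : ℝ → ℝ := fun s => ‖u s‖ ^ 2 with hfdef
  set g : ℝ → ℝ := fun s => 2 * (γ * (inner ℂ (u s) (Ls (u s)) : ℂ).re) with hgdef
  have hu_deriv : ∀ s, HasDerivAt u (L (u s)) s := fun s => flow_hasDerivAt L x₀ s
  have hu_cont : Continuous u := by
    have : Differentiable ℝ u := fun s => (hu_deriv s).differentiableAt
    exact this.continuous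
  have hf_deriv : ∀ s, HasDerivAt f (g s) s := by
    intro s
    have h1 := (hu_deriv s).inner ℂ (hu_deriv s)
    have h2 : HasDerivAt (fun τ => (inner ℂ (u τ) (u τ) : ℂ).re)
        ((inner ℂ (u s) (L (u s)) + inner ℂ (L (u s)) (u s) : ℂ).re) s :=
      Complex.reCLM.hasFDerivAt.comp_hasDerivAt s h1
    have h3 : (fun τ => (inner ℂ (u τ) (u τ) : ℂ).re) = f := by
      funext τ
      have := inner_self_eq_norm_sq (𝕜 := ℂ) (x := u τ)
      simpa [hfdef] using this
    have h4 : ((inner ℂ (u s) (L (u s)) + inner ℂ (L (u s)) (u s) : ℂ)).re = g s := by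
      rw [Complex.add_re]
      have h5 : (inner ℂ (L (u s)) (u s) : ℂ).re = (inner ℂ (u s) (L (u s)) : ℂ).re := by
        rw [← inner_conj_symm, Complex.conj_re]
      rw [h5, re_inner_L Ls La hLa_skew γ L hL (u s)]
      simp only [hgdef]; ring
    rw [h3, h4] at h2
    exact h2
  have hf_cont : Continuous f := (hu_cont.norm.pow 2)
  have hg_cont : Continuous g := by
    apply continuous_const.mul
    apply continuous_const.mul
    exact Complex.continuous_re.comp (Continuous.inner hu_cont (Ls.continuous.comp hu_cont))
  have hf_anti : Antitone f := by
    apply antitone_of_deriv_nonpos (fun s => (hf_deriv s).differentiableAt)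
    intro s
    rw [(hf_deriv s).deriv]
    have := hLs_neg (u s)
    simp only [hgdef]
    nlinarith
  set F : ℝ → ℝ := fun r => (1 / T) * ∫ s in r..(r + T), f s with hFdef
  have hF_deriv : ∀ r, HasDerivAt F ((1 / T) * (f (r + T) - f r)) r := by
    intro r
    have hG : ∀ b : ℝ, HasDerivAt (fun x => ∫ s in (0:ℝ)..x, f s) (f b) b := fun b =>
      (hf_cont.integral_hasStrictDerivAt 0 b).hasDerivAt
    have h1 : HasDerivAt (fun x : ℝ => ∫ s in (0:ℝ)..(x + T), f s) (f (r + T)) r := by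
      have := (hG (r + T)).comp r ((hasDerivAt_id r).add_const T)
      rw [mul_one] at this; exact this
    have h2 := (h1.sub (hG r)).const_mul (1 / T)
    have h3 : F = fun x : ℝ => (1 / T) * ((∫ s in (0:ℝ)..(x + T), f s) - ∫ s in (0:ℝ)..x, f s) := by
      funext x
      show (1 / T) * ∫ s in x..(x + T), f s = _
      congr 1
      exact (intervalIntegral.integral_interval_sub_left (μ := volume)
        (hf_cont.intervalIntegrable 0 (x + T)) (hf_cont.intervalIntegrable 0 x)).symm
    rw [h3]
    exact h2
  have hshift_int : ∀ (φ : ℝ → ℝ) (r : ℝ),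
      ∫ s in r..(r + T), φ s = ∫ σ in (0:ℝ)..T, φ (σ + r) := by
    intro φ r
    rw [intervalIntegral.integral_comp_add_right φ r, zero_add, add_comm T r]
  have hkey : ∀ r, (1 / T) * (f (r + T) - f r) ≤ -(2 * ν) * F r := by
    intro r
    set x' : H := NormedSpace.exp (r • L) x₀ with hx'def
    have hx' : x' ∈ (LinearMap.ker (L : H →ₗ[ℂ] H) : Submodule ℂ H)ᗮ :=
      mem_orth_invariant Ls La hLs_sa hLs_neg hLa_skew γ hγ L hL x₀ hx₀ r
    have hshift : ∀ σ : ℝ, u (σ + r) = NormedSpace.exp (σ • L) x' := by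
      intro σ
      show NormedSpace.exp ((σ + r) • L) x₀ = _
      rw [add_smul, NormedSpace.exp_add_of_commute_of_mem_ball (𝕂 := ℂ) (((Commute.refl L).smul_left σ).smul_right r)
        (by simp [NormedSpace.expSeries_radius_eq_top]) (by simp [NormedSpace.expSeries_radius_eq_top])]
      simp [hx'def]
    have hftc : f (r + T) - f r = ∫ s in r..(r + T), g s :=
      (intervalIntegral.integral_eq_sub_of_hasDerivAt (fun s _ => hf_deriv s)
        (hg_cont.intervalIntegrable _ _)).symm
    set Q : ℝ := (1 / T) * ∫ σ in (0:ℝ)..T,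
      (inner ℂ (NormedSpace.exp (σ • L) x') (-(Ls (NormedSpace.exp (σ • L) x'))) : ℂ).re
      with hQdef
    have hflow' : F r ≤ C * Q := by
      have h := hflow x' hx'
      have hFr : F r = (1 / T) * ∫ σ in (0:ℝ)..T, ‖NormedSpace.exp (σ • L) x'‖ ^ 2 := by
        rw [hFdef]
        simp only
        rw [hshift_int f r]
        congr 1
        apply intervalIntegral.integral_congr
        intro σ _
        simp only [hfdef, hshift σ]
      rw [hFr]
      exact h
    have hderiv_eq : (1 / T) * (f (r + T) - f r) = -(2 * γ) * Q := by
      rw [hftc, hshift_int g r]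
      have hcongr : ∀ σ ∈ Set.uIcc (0:ℝ) T, g (σ + r)
          = (-(2 * γ)) * (inner ℂ (NormedSpace.exp (σ • L) x')
              (-(Ls (NormedSpace.exp (σ • L) x'))) : ℂ).re := by
        intro σ _
        simp only [hgdef, hshift σ, inner_neg_right, Complex.neg_re]
        ring
      rw [intervalIntegral.integral_congr hcongr, intervalIntegral.integral_const_mul, hQdef]
      ring
    rw [hderiv_eq]
    have hνFQ : ν * F r ≤ γ * Q := by
      rw [hνdef, div_mul_eq_mul_div, div_le_iff₀ hC]
      nlinarith [mul_le_mul_of_nonneg_left hflow' hγ.le]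
    linarith
  -- Gronwall via monotonicity of r ↦ exp(2νr) F r
  set h : ℝ → ℝ := fun r => Real.exp (2 * ν * r) * F r with hhdef
  have hh_deriv : ∀ r, HasDerivAt h
      (Real.exp (2 * ν * r) * (2 * ν) * F r
        + Real.exp (2 * ν * r) * ((1 / T) * (f (r + T) - f r))) r := by
    intro r
    have he : HasDerivAt (fun x : ℝ => Real.exp (2 * ν * x)) (Real.exp (2 * ν * r) * (2 * ν)) r := by
      have h0 : HasDerivAt (fun x : ℝ => 2 * ν * x) (2 * ν) r := by
        simpa using (hasDerivAt_id r).const_mul (2 * ν)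
      simpa using h0.exp
    exact he.mul (hF_deriv r)
  have hh_anti : Antitone h := by
    apply antitone_of_deriv_nonpos (fun r => (hh_deriv r).differentiableAt)
    intro r
    rw [(hh_deriv r).deriv]
    have hk := hkey r
    have h2 := mul_le_mul_of_nonneg_left hk (Real.exp_nonneg (2 * ν * r))
    have h3 : Real.exp (2 * ν * r) * (-(2 * ν) * F r)
        = -(Real.exp (2 * ν * r) * (2 * ν) * F r) := by ring
    linarith [h2, h3]
  have hstep : h t ≤ h 0 := hh_anti ht
  have hF0 : F 0 ≤ ‖x₀‖ ^ 2 := by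
    have hf0 : f 0 = ‖x₀‖ ^ 2 := by
      simp [hfdef, hudef]
    have hmono : (∫ s in (0:ℝ)..(0 + T), f s) ≤ ∫ s in (0:ℝ)..(0 + T), ‖x₀‖ ^ 2 := by
      apply intervalIntegral.integral_mono_on (by linarith)
        (hf_cont.intervalIntegrable _ _) intervalIntegrable_const
      intro s hs
      rw [← hf0]
      exact hf_anti hs.1
    have hconst : (∫ s in (0:ℝ)..(0 + T), (‖x₀‖ ^ 2 : ℝ)) = T * ‖x₀‖ ^ 2 := by
      simp [intervalIntegral.integral_const]
    rw [hFdef]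
    simp only
    calc (1 / T) * ∫ s in (0:ℝ)..(0 + T), f s ≤ (1 / T) * (T * ‖x₀‖ ^ 2) := by
          apply mul_le_mul_of_nonneg_left _ (by positivity)
          rw [← hconst]; exact hmono
      _ = ‖x₀‖ ^ 2 := by field_simp
  have hh0 : h 0 = F 0 := by simp [hhdef]
  have hmain : Real.exp (2 * ν * t) * F t ≤ ‖x₀‖ ^ 2 := by
    calc Real.exp (2 * ν * t) * F t = h t := rfl
      _ ≤ h 0 := hstep
      _ = F 0 := hh0
      _ ≤ ‖x₀‖ ^ 2 := hF0
  have hfinal : F t ≤ Real.exp (-2 * ν * t) * ‖x₀‖ ^ 2 := by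
    have h1 : F t = Real.exp (-2 * ν * t) * (Real.exp (2 * ν * t) * F t) := by
      rw [← mul_assoc, ← Real.exp_add]
      ring_nf
      simp
    rw [h1]
    exact mul_le_mul_of_nonneg_left hmain (le_of_lt (Real.exp_pos _))
  exact hfinal
end

section
/- Let H be a complex Hilbert space and L a bounded operator on H, let P_∞ denote the orthogonal projection onto ker(L), and let ν > 0. Suppose the semigroup exp(tL) decays exponentially with prefactor C = 1: ‖exp(tL)x − P_∞ x‖ ≤ e^{−νt} ‖x − P_∞ x‖ for all t ≥ 0 and all x ∈ H. Then L is coercive on ker(L)^⊥: Re⟨x, Lx⟩ ≤ −ν ‖x‖² for every x ∈ ker(L)^⊥. -/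
open NormedSpace

/-- If the semigroup `exp(tL)` decays exponentially with prefactor `C = 1`,
i.e. `‖exp(tL)x − P∞x‖ ≤ e^{−νt}‖x − P∞x‖` for all `t ≥ 0` and `x`, where `P∞` is the
orthogonal projection onto `ker L`, then `L` is coercive on `ker(L)ᗮ`:
`Re⟨x, Lx⟩ ≤ −ν‖x‖²` for all `x ∈ ker(L)ᗮ`. -/
theorem coercive_of_exponential_decay_prefactor_one
    {H : Type*} [NormedAddCommGroup H] [InnerProductSpace ℂ H] [CompleteSpace H]
    (L : H →L[ℂ] H) (ν : ℝ) (hν : 0 < ν)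
    (Pinf : H →L[ℂ] H)
    (hPmem : ∀ x : H, Pinf x ∈ LinearMap.ker (L : H →ₗ[ℂ] H))
    (hPorth : ∀ x : H, x - Pinf x ∈ (LinearMap.ker (L : H →ₗ[ℂ] H) : Submodule ℂ H)ᗮ)
    (hdecay : ∀ t : ℝ, 0 ≤ t → ∀ x : H,
      ‖NormedSpace.exp (t • L) x - Pinf x‖ ≤ Real.exp (-ν * t) * ‖x - Pinf x‖) :
    ∀ x ∈ (LinearMap.ker (L : H →ₗ[ℂ] H) : Submodule ℂ H)ᗮ, (inner ℂ x (L x) : ℂ).re ≤ -ν * ‖x‖ ^ 2 := by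
  intro x hx
  -- Pinf x = 0
  have hP0 : Pinf x = 0 := by
    have h1 : (inner ℂ (Pinf x) x : ℂ) = 0 := hx (Pinf x) (hPmem x)
    have h2 : (inner ℂ (Pinf x) (x - Pinf x) : ℂ) = 0 := hPorth x (Pinf x) (hPmem x)
    have : (inner ℂ (Pinf x) (Pinf x) : ℂ) = 0 := by
      rw [inner_sub_right] at h2
      rw [h1] at h2
      linear_combination -h2
    exact inner_self_eq_zero.mp this
  -- the trajectory
  set u : ℝ → H := fun t => NormedSpace.exp (t • L) x with hu
  have hu0 : u 0 = x := by simp [hu, NormedSpace.exp_zero]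
  -- derivative of u at 0 is L x
  have hude : HasDerivAt u (L x) 0 := by
    have hexp : HasDerivAt (fun t : ℝ => NormedSpace.exp (t • L))
        (NormedSpace.exp ((0:ℝ) • L) * L) 0 := hasDerivAt_exp_smul_const L 0
    have hT : HasDerivAt (fun t : ℝ =>
        ((ContinuousLinearMap.apply ℂ H x).restrictScalars ℝ) (NormedSpace.exp (t • L)))
        (((ContinuousLinearMap.apply ℂ H x).restrictScalars ℝ) (NormedSpace.exp ((0:ℝ) • L) * L))
        0 :=
      (((ContinuousLinearMap.apply ℂ H x).restrictScalars ℝ).hasFDerivAt).comp_hasDerivAt 0 hexp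
    have heq : (fun t : ℝ =>
        ((ContinuousLinearMap.apply ℂ H x).restrictScalars ℝ) (NormedSpace.exp (t • L))) = u := by
      funext t
      simp [hu]
    rw [heq] at hT
    convert hT using 1
    simp [NormedSpace.exp_zero]
  -- f t = ‖u t‖²
  have hfin : HasDerivAt (fun t => (inner ℂ (u t) (u t) : ℂ)) (inner ℂ x (L x) + inner ℂ (L x) x) 0 := by
    have := hude.inner ℂ hude
    rwa [hu0] at this
  have hf : HasDerivAt (fun t => ((inner ℂ (u t) (u t) : ℂ)).re)
      (2 * (inner ℂ x (L x) : ℂ).re) 0 := by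
    have := (Complex.reCLM.hasFDerivAt).comp_hasDerivAt 0 hfin
    refine this.congr_deriv ?_
    simp only [Complex.reCLM_apply, Complex.add_re]
    rw [← inner_conj_symm (L x) x, Complex.conj_re]
    ring
  -- g t = exp(-2νt)‖x‖²
  have hg : HasDerivAt (fun t : ℝ => Real.exp (-(2*ν) * t) * ‖x‖^2)
      (-(2*ν) * ‖x‖^2) 0 := by
    have h1 : HasDerivAt (fun t : ℝ => -(2*ν) * t) (-(2*ν)) 0 := by
      simpa using (hasDerivAt_id (0:ℝ)).const_mul (-(2*ν))
    have h2 := (h1.exp).mul_const (‖x‖^2)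
    simpa using h2
  -- h := f - g has h(t) ≤ 0 for t ≥ 0 and h(0) = 0
  have hh : HasDerivAt (fun t => ((inner ℂ (u t) (u t) : ℂ)).re - Real.exp (-(2*ν) * t) * ‖x‖^2)
      (2 * (inner ℂ x (L x) : ℂ).re - (-(2*ν) * ‖x‖^2)) 0 := hf.sub hg
  have hle : ∀ t : ℝ, 0 < t →
      ((inner ℂ (u t) (u t) : ℂ)).re - Real.exp (-(2*ν) * t) * ‖x‖^2 ≤ 0 := by
    intro t ht
    have hd := hdecay t ht.le x
    rw [hP0, sub_zero, sub_zero] at hd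
    have hnorm : ‖u t‖^2 ≤ (Real.exp (-ν * t))^2 * ‖x‖^2 := by
      calc ‖u t‖^2 ≤ (Real.exp (-ν * t) * ‖x‖)^2 := by
            apply pow_le_pow_left₀ (norm_nonneg _) hd
        _ = (Real.exp (-ν * t))^2 * ‖x‖^2 := by ring
    have hexp2 : (Real.exp (-ν * t))^2 = Real.exp (-(2*ν) * t) := by
      rw [← Real.exp_nat_mul]
      ring_nf
    have hutu : ((inner ℂ (u t) (u t) : ℂ)).re = ‖u t‖^2 := by
      simpa using inner_self_eq_norm_sq (𝕜 := ℂ) (u t)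
    rw [hexp2] at hnorm
    rw [hutu]
    linarith
  have h0 : ((inner ℂ (u 0) (u 0) : ℂ)).re - Real.exp (-(2*ν) * 0) * ‖x‖^2 = 0 := by
    have hxx : ((inner ℂ x x : ℂ)).re = ‖x‖^2 := by
      simpa using inner_self_eq_norm_sq (𝕜 := ℂ) x
    rw [hu0, hxx]
    simp
  -- conclude derivative at 0 is ≤ 0 via right slopes
  set h : ℝ → ℝ := fun t => ((inner ℂ (u t) (u t) : ℂ)).re - Real.exp (-(2*ν) * t) * ‖x‖^2 with hhdef
  have htend : Filter.Tendsto (slope h 0) (nhdsWithin 0 (Set.Ioi 0))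
      (nhds (2 * (inner ℂ x (L x) : ℂ).re - (-(2*ν) * ‖x‖^2))) :=
    (hasDerivAt_iff_tendsto_slope.mp hh).mono_left
      (nhdsWithin_mono _ (fun t ht => Set.mem_compl_singleton_iff.mpr (ne_of_gt ht)))
  have hfinal : 2 * (inner ℂ x (L x) : ℂ).re - (-(2*ν) * ‖x‖^2) ≤ 0 := by
    refine le_of_tendsto htend ?_
    filter_upwards [self_mem_nhdsWithin] with t ht
    have h1 : h t ≤ 0 := hle t ht
    have h2 : h 0 = 0 := h0
    have ht' : (0:ℝ) < t := ht
    rw [slope_def_field, h2, sub_zero, sub_zero]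
    exact div_nonpos_of_nonpos_of_nonneg h1 ht'.le
  nlinarith [hfinal]
end

section
/- Let H be a complex Hilbert space with a closed subspace H_O and orthogonal projection Π onto H_O. Let L_s be a bounded self-adjoint operator on H satisfying ⟨x, L_s y⟩ = 0 for all x ∈ H_O and all y ∈ H, and the coercivity bound ⟨x, −L_s x⟩ ≥ λ_S ‖x − Πx‖² for all x ∈ H, with λ_S > 0. Then ker(L_s) = H_O, and for every bounded operator L_a on H, every bounded self-adjoint operator L_O on H_O, every bounded positive operator S on H_O^⊥, and every γ > 0: L_a is a second-order lift of L_O with intertwining operator S if and only if L_a + γ L_s is a second-order lift of L_O with intertwining operator S. -/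
/-- A bounded operator `L` on `H` is a *second-order lift* of a bounded operator `LO`
(thought of as an operator on the closed subspace `K = H_O`) with intertwining operator `S`
(thought of as an operator on `Kᗮ`) if (i) `⟨x, Ly⟩ = 0` for all `x, y ∈ K`, and
(ii) `⟨Lx, S(Ly)⟩ = −⟨x, LO y⟩` for all `x, y ∈ K`. -/
def IsSecondOrderLift {H : Type*} [NormedAddCommGroup H] [InnerProductSpace ℂ H]
    (K : Submodule ℂ H) (L LO S : H →L[ℂ] H) : Prop :=
  (∀ x ∈ K, ∀ y ∈ K, (inner ℂ x (L y) : ℂ) = 0) ∧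
  (∀ x ∈ K, ∀ y ∈ K, (inner ℂ (L x) (S (L y)) : ℂ) = -(inner ℂ x (LO y) : ℂ))

/-- If `L_s` is bounded self-adjoint with `⟨x, L_s y⟩ = 0` for all
`x ∈ H_O`, `y ∈ H`, and coercive: `⟨x, −L_s x⟩ ≥ λ_S‖x − Πx‖²` with `λ_S > 0` (`Π` the
orthogonal projection onto the closed subspace `H_O`), then `ker L_s = H_O`, and for every
bounded `L_a`, every bounded self-adjoint `L_O` on `H_O`, every bounded positive `S` on
`H_Oᗮ` and every `γ > 0`: `L_a` is a second-order lift of `L_O` with intertwining operator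
`S` iff `L_a + γL_s` is. -/
theorem lift_invariant_under_adding_symmetric_part
    {H : Type*} [NormedAddCommGroup H] [InnerProductSpace ℂ H] [CompleteSpace H]
    (K : Submodule ℂ H) (hKclosed : IsClosed (K : Set H))
    (P : H →L[ℂ] H) (hPmem : ∀ x : H, P x ∈ K) (hPorth : ∀ x : H, x - P x ∈ Kᗮ)
    (Ls : H →L[ℂ] H) (hLs_sa : IsSelfAdjoint Ls)
    (hLs_orth : ∀ x ∈ K, ∀ y : H, (inner ℂ x (Ls y) : ℂ) = 0)
    (lamS : ℝ) (hlamS : 0 < lamS)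
    (hcoer : ∀ x : H, lamS * ‖x - P x‖ ^ 2 ≤ (inner ℂ x (-(Ls x)) : ℂ).re) :
    (LinearMap.ker (Ls : H →ₗ[ℂ] H) : Submodule ℂ H) = K ∧
    ∀ (La LO S : H →L[ℂ] H),
      (∀ x ∈ K, LO x ∈ K) →
      (∀ x ∈ K, ∀ y ∈ K, (inner ℂ x (LO y) : ℂ) = inner ℂ (LO x) y) →
      (∀ x ∈ Kᗮ, S x ∈ Kᗮ) →
      (∀ x ∈ Kᗮ, 0 ≤ (inner ℂ x (S x) : ℂ).re ∧ (inner ℂ x (S x) : ℂ).im = 0) →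
      ∀ γ : ℝ, 0 < γ →
        (IsSecondOrderLift K La LO S ↔ IsSecondOrderLift K (La + (γ : ℂ) • Ls) LO S) := by
  have hsym := (ContinuousLinearMap.isSelfAdjoint_iff_isSymmetric.mp hLs_sa)
  have hK0 : ∀ y ∈ K, Ls y = 0 := by
    intro y hy
    have : ∀ z : H, (inner ℂ z (Ls y) : ℂ) = 0 := by
      intro z
      have h1 : (inner ℂ (Ls z) y : ℂ) = inner ℂ z (Ls y) := hsym z y
      have h2 : (inner ℂ y (Ls z) : ℂ) = 0 := hLs_orth y hy z
      rw [← h1, ← inner_conj_symm, h2, map_zero]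
    exact ext_inner_left ℂ (fun v => by rw [this v, inner_zero_right])
  constructor
  · ext x
    simp only [LinearMap.mem_ker, ContinuousLinearMap.coe_coe]
    constructor
    · intro hx
      have h := hcoer x
      rw [hx] at h
      simp only [neg_zero, inner_zero_right, Complex.zero_re] at h
      have hnorm : ‖x - P x‖ = 0 := by
        by_contra hne
        have hpos : 0 < ‖x - P x‖ := lt_of_le_of_ne (norm_nonneg _) (Ne.symm hne)
        nlinarith [mul_pos hlamS (mul_pos hpos hpos)]
      have : x - P x = 0 := by rwa [norm_eq_zero] at hnorm
      have hx' : x = P x := sub_eq_zero.mp this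
      exact hx' ▸ hPmem x
    · intro hx
      exact hK0 x hx
  · intro La LO S _ _ _ _ γ hγ
    have heq : ∀ y ∈ K, (La + (γ : ℂ) • Ls) y = La y := by
      intro y hy
      simp [hK0 y hy]
    constructor
    · rintro ⟨h1, h2⟩
      exact ⟨fun x hx y hy => by rw [heq y hy]; exact h1 x hx y hy,
        fun x hx y hy => by rw [heq x hx, heq y hy]; exact h2 x hx y hy⟩
    · rintro ⟨h1, h2⟩
      exact ⟨fun x hx y hy => by rw [← heq y hy]; exact h1 x hx y hy,
        fun x hx y hy => by rw [← heq x hx, ← heq y hy]; exact h2 x hx y hy⟩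
end
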